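/- Let P : C̃ → C together with ramification numbers e be a ramified covering of small categories, let x̃ be an object of C̃ and x = P(x̃), and let n ≥ 1. Then under the map induced by P from N_n(C̃)^{x̃} to N_n(C)^{x}: every chain in N_n(C)^{x} other than the constant identity chain 1_x = (x →^{1_x} x →^{1_x} ⋯ →^{1_x} x) has exactly e(x̃) preimages, and the constant identity chain 1_x has exactly one preimage, namely the constant identity chain 1_{x̃}. -/

import Mathlib

open CategoryTheory

universe u

/-- The set of morphisms of `C` with target `x`, encoded as a sigma type. -/
abbrev Tgt (C : Type u) [SmallCategory C] (x : C) : Type u := Σ a : C, a ⟶ x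

/-- The set of morphisms of `C` with source `x`, encoded as a sigma type. -/
abbrev Src (C : Type u) [SmallCategory C] (x : C) : Type u := Σ b : C, x ⟶ b

/-- The map `T(xt) → T(P xt)` induced by a functor `P`. -/
def tgtMap {D C : Type u} [SmallCategory D] [SmallCategory C] (P : D ⥤ C) (x : D) :
    Tgt D x → Tgt C (P.obj x) := fun g => ⟨P.obj g.1, P.map g.2⟩

/-- The map `S(xt) → S(P xt)` induced by a functor `P`. -/
def srcMap {D C : Type u} [SmallCategory D] [SmallCategory C] (P : D ⥤ C) (x : D) :
    Src D x → Src C (P.obj x) := fun g => ⟨P.obj g.1, P.map g.2⟩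

/-- `P : D ⥤ C` together with ramification numbers `e` is a ramified covering:
`C` is connected, `e x ≥ 1` for all `x`, `P : T(xt) → T(P xt)` is bijective,
every morphism of `S̄(P xt)` has exactly `e xt` preimages in `S̄(xt)`, and
`e xt = 1` whenever `S̄(P xt)` is empty. -/
structure IsRamifiedCovering {D C : Type u} [SmallCategory D] [SmallCategory C]
    (P : D ⥤ C) (e : D → ℕ) : Prop where
  nonempty : Nonempty C
  zigzag : ∀ x y : C, Zigzag x y
  one_le : ∀ x : D, 1 ≤ e x
  tgt_bij : ∀ x : D, Function.Bijective (tgtMap P x)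
  src_count : ∀ (x : D) (g : Src C (P.obj x)), g ≠ ⟨P.obj x, 𝟙 (P.obj x)⟩ →
    Nat.card {h : Src D x // h ≠ ⟨x, 𝟙 x⟩ ∧ srcMap P x h = g} = e x
  ram_one : ∀ x : D, (∀ g : Src C (P.obj x), g = ⟨P.obj x, 𝟙 (P.obj x)⟩) → e x = 1


/-- A composable chain of `n` morphisms `x₀ → x₁ → ⋯ → xₙ` in `C`
(an element of `N_n(C)`). -/
structure Chain (C : Type u) [SmallCategory C] (n : ℕ) : Type u where
  obj : Fin (n + 1) → C
  map : ∀ i : Fin n, obj i.castSucc ⟶ obj i.succ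

/-- A chain is non-degenerate if none of its morphisms is an identity
(an element of `N̄_n(C)`). -/
def Chain.NonDeg {C : Type u} [SmallCategory C] {n : ℕ} (c : Chain C n) : Prop :=
  ∀ i : Fin n,
    (⟨c.obj i.succ, c.map i⟩ : Src C (c.obj i.castSucc)) ≠ ⟨c.obj i.castSucc, 𝟙 _⟩

/-- The image of a chain under a functor `P`. -/
def Chain.push {D C : Type u} [SmallCategory D] [SmallCategory C] (P : D ⥤ C) {n : ℕ}
    (c : Chain D n) : Chain C n :=
  ⟨fun i => P.obj (c.obj i), fun i => P.map (c.map i)⟩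

/-- The constant identity chain `1_x` at an object `x`. -/
def Chain.const (C : Type u) [SmallCategory C] (x : C) (n : ℕ) : Chain C n :=
  ⟨fun _ => x, fun _ => 𝟙 x⟩

variable {C : Type u} [SmallCategory C] {n : ℕ}

theorem Chain.ext' {c c' : Chain C n} (h : c.obj = c'.obj)
    (hm : ∀ i, c.map i = eqToHom (congrFun h _) ≫ c'.map i ≫ eqToHom (congrFun h _).symm) :
    c = c' := by
  cases c; cases c'
  dsimp at h
  subst h
  simp only [eqToHom_refl, Category.id_comp, Category.comp_id] at hm
  congr 1
  funext i
  exact hm i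

def Chain.tail (c : Chain C (n+1)) : Chain C n where
  obj i := c.obj i.succ
  map i := c.map i.succ

def Chain.cons (x : C) (t : Chain C n) (g : x ⟶ t.obj 0) : Chain C (n+1) where
  obj := fun i => match i with
    | ⟨0, _⟩ => x
    | ⟨j+1, h⟩ => t.obj ⟨j, by omega⟩
  map := fun i => match i with
    | ⟨0, _⟩ => g
    | ⟨j+1, h⟩ => t.map ⟨j, by omega⟩

variable {D : Type u} [SmallCategory D] (P : D ⥤ C)

@[simp] theorem Chain.cons_obj_zero (x : C) (t : Chain C n) (g : x ⟶ t.obj 0) :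
    (Chain.cons x t g).obj 0 = x := rfl

@[simp] theorem Chain.tail_cons (x : C) (t : Chain C n) (g : x ⟶ t.obj 0) :
    (Chain.cons x t g).tail = t := by
  refine Chain.ext' (funext fun i => ?_) (fun i => ?_)
  · rcases i with ⟨j, hj⟩; rfl
  · rcases i with ⟨j, hj⟩; exact ((conj_eqToHom_iff_heq _ _ (by rfl) (by rfl)).2 HEq.rfl)

theorem Chain.cons_map_zero (x : C) (t : Chain C n) (g : x ⟶ t.obj 0) :
    (Chain.cons x t g).map 0 = g := rfl

theorem Chain.map_congr {c c' : Chain C n} (h : c = c') (i : Fin n) :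
    c.map i = eqToHom (congrFun (congrArg Chain.obj h) _) ≫ c'.map i ≫
      eqToHom (congrFun (congrArg Chain.obj h) _).symm := by
  subst h; simp

theorem Chain.eq_cons (c : Chain C (n+1)) :
    c = Chain.cons (c.obj 0) c.tail (c.map 0) := by
  refine Chain.ext' (funext fun i => ?_) (fun i => ?_)
  · rcases i with ⟨(_|j), hj⟩ <;> rfl
  · rcases i with ⟨(_|j), hj⟩
    · exact ((conj_eqToHom_iff_heq _ _ (by rfl) (by rfl)).2 HEq.rfl)
    · exact ((conj_eqToHom_iff_heq _ _ (by rfl) (by rfl)).2 HEq.rfl)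

theorem Chain.push_cons (x : D) (t : Chain D n) (g : x ⟶ t.obj 0) :
    (Chain.cons x t g).push P = Chain.cons (P.obj x) (t.push P) (P.map g) := by
  refine Chain.ext' (funext fun i => ?_) (fun i => ?_)
  · rcases i with ⟨(_|j), hj⟩ <;> rfl
  · rcases i with ⟨(_|j), hj⟩
    · exact ((conj_eqToHom_iff_heq _ _ (by rfl) (by rfl)).2 HEq.rfl)
    · exact ((conj_eqToHom_iff_heq _ _ (by rfl) (by rfl)).2 HEq.rfl)

@[simp] theorem Chain.push_tail (c : Chain D (n+1)) :
    (c.tail).push P = (c.push P).tail := rfl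

@[simp] theorem Chain.push_const (x : D) : (Chain.const D x n).push P = Chain.const C (P.obj x) n := by
  refine Chain.ext' rfl (fun i => ?_)
  simp [Chain.push, Chain.const]
  exact (eqToHom_refl _ _).symm

@[simp] theorem Chain.const_tail (x : C) : (Chain.const C x (n+1)).tail = Chain.const C x n := rfl

theorem Chain.cons_eq_const_iff (x : C) (t : Chain C n) (g : x ⟶ t.obj 0) :
    Chain.cons x t g = Chain.const C x (n+1) ↔
      t = Chain.const C x n ∧ (⟨t.obj 0, g⟩ : Src C x) = ⟨x, 𝟙 x⟩ := by
  constructor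
  · intro hc
    have h1 : t = Chain.const C x n := by
      rw [← Chain.tail_cons x t g, hc]; rfl
    refine ⟨h1, ?_⟩
    subst h1
    have h3 := Chain.map_congr hc 0
    rw [Chain.cons_map_zero] at h3
    have h4 : g = 𝟙 x := eq_of_heq ((conj_eqToHom_iff_heq g (𝟙 x)
      rfl rfl).1 h3)
    show (⟨x, g⟩ : Src C x) = ⟨x, 𝟙 x⟩
    rw [h4]
  · rintro ⟨h1, h2⟩
    subst h1
    obtain ⟨-, h2b⟩ := Sigma.mk.inj_iff.mp h2
    have h4 : g = 𝟙 x := eq_of_heq h2b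
    subst h4
    refine Chain.ext' (funext fun i => ?_) (fun i => ?_)
    · rcases i with ⟨(_|j), hj⟩ <;> rfl
    · rcases i with ⟨(_|j), hj⟩
      · exact ((conj_eqToHom_iff_heq _ _ (by rfl) (by rfl)).2 HEq.rfl)
      · exact ((conj_eqToHom_iff_heq _ _ (by rfl) (by rfl)).2 HEq.rfl)


section Covering

variable {D : Type u} [SmallCategory D] {P : D ⥤ C} {e : D → ℕ}

theorem tgt_lift_unique (h : IsRamifiedCovering P e) {z a b : D} (φ : a ⟶ z) (ψ : b ⟶ z)
    (hobj : P.obj a = P.obj b) (hmap : HEq (P.map φ) (P.map ψ)) :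
    (⟨a, φ⟩ : Tgt D z) = ⟨b, ψ⟩ :=
  (h.tgt_bij z).1 (Sigma.ext hobj hmap)

theorem id_lift (h : IsRamifiedCovering P e) (xt : D) (s : Src D xt)
    (hs : srcMap P xt s = ⟨P.obj xt, 𝟙 (P.obj xt)⟩) : s = ⟨xt, 𝟙 xt⟩ := by
  obtain ⟨b, g⟩ := s
  obtain ⟨hobj, hheq⟩ := Sigma.mk.inj_iff.mp hs
  have h2 : HEq (P.map g) (P.map (𝟙 b)) := by
    rw [P.map_id]
    refine HEq.trans hheq ?_
    rw [hobj]
  have h3 := tgt_lift_unique h g (𝟙 b) hobj.symm h2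
  obtain ⟨hb, hg⟩ := Sigma.mk.inj_iff.mp h3
  subst hb
  rw [eq_of_heq hg]

theorem lifts_count_ne (h : IsRamifiedCovering P e) (xt : D) (f : Src C (P.obj xt))
    (hf : f ≠ ⟨P.obj xt, 𝟙 (P.obj xt)⟩) :
    Nat.card {s : Src D xt // srcMap P xt s = f} = e xt := by
  rw [← h.src_count xt f hf]
  apply Nat.card_congr
  apply Equiv.subtypeEquivRight
  intro s
  constructor
  · intro hs
    refine ⟨?_, hs⟩
    rintro rfl
    apply hf
    rw [← hs]
    simp [srcMap]
  · exact fun hs => hs.2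

def lifts_id_unique (h : IsRamifiedCovering P e) (xt : D) :
    Unique {s : Src D xt // srcMap P xt s = ⟨P.obj xt, 𝟙 (P.obj xt)⟩} where
  default := ⟨⟨xt, 𝟙 xt⟩, by simp [srcMap]⟩
  uniq := fun s => Subtype.ext (id_lift h xt s.1 s.2)

theorem lifts_count_id (h : IsRamifiedCovering P e) (xt : D) :
    Nat.card {s : Src D xt // srcMap P xt s = ⟨P.obj xt, 𝟙 (P.obj xt)⟩} = 1 := by
  haveI := lifts_id_unique h xt
  exact Nat.card_unique

theorem lifts_count_flat (h : IsRamifiedCovering P e) (zt : D) (w : C) (hw : P.obj zt = w)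
    (F2 : Src C w) (hF2 : F2 ≠ ⟨w, 𝟙 w⟩) :
    Nat.card {k : Src D zt //
      (⟨P.obj zt, srcMap P zt k⟩ : Σ y : C, Src C y) = ⟨w, F2⟩} = e zt := by
  subst hw
  rw [← lifts_count_ne h zt F2 hF2]
  apply Nat.card_congr
  apply Equiv.subtypeEquivRight
  intro s
  rw [Sigma.mk.inj_iff]
  simp

end Covering

section Covering2

variable {D : Type u} [SmallCategory D] {P : D ⥤ C} {e : D → ℕ}

theorem Src.mk_ext {x a b : C} {s : x ⟶ a} {t : x ⟶ b} (q : a = b)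
    (hm : s = t ≫ eqToHom q.symm) : (⟨a, s⟩ : Src C x) = ⟨b, t⟩ := by
  subst q; simp at hm; rw [hm]

theorem src_eq_elim {x a b : C} {s : x ⟶ a} {t : x ⟶ b}
    (hh : (⟨a, s⟩ : Src C x) = ⟨b, t⟩) : ∃ q : a = b, s = t ≫ eqToHom q.symm := by
  obtain ⟨q, hs⟩ := Sigma.mk.inj_iff.mp hh
  subst q
  exact ⟨rfl, by simp [eq_of_heq hs]⟩

theorem flat_eq_elim {a b : C} {s : Src C a} {t : Src C b}
    (hh : (⟨a, s⟩ : Σ y : C, Src C y) = ⟨b, t⟩) :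
    ∃ (q : a = b) (q2 : s.1 = t.1), s.2 = eqToHom q ≫ t.2 ≫ eqToHom q2.symm := by
  obtain ⟨q, hs⟩ := Sigma.mk.inj_iff.mp hh
  subst q
  obtain ⟨q2, h2⟩ := src_eq_elim (show (⟨s.1, s.2⟩ : Src C a) = ⟨t.1, t.2⟩ by
    simpa using eq_of_heq hs)
  exact ⟨rfl, q2, by simpa using h2⟩

theorem e_target_one (h : IsRamifiedCovering P e) (xt : D) (g : Src D xt)
    (hg : srcMap P xt g ≠ ⟨P.obj xt, 𝟙 (P.obj xt)⟩) : e g.1 = 1 := by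
  by_cases hS : ∀ k : Src C (P.obj g.1), k = ⟨P.obj g.1, 𝟙 (P.obj g.1)⟩
  · exact h.ram_one _ hS
  push_neg at hS
  obtain ⟨f2, hf2⟩ := hS
  classical
  by_contra hcon
  have he2 : 2 ≤ e g.1 := by have := h.one_le g.1; omega
  obtain ⟨b0, m0⟩ := g
  dsimp only at *
  set A := {g' : Src D xt // srcMap P xt g' = srcMap P xt ⟨b0, m0⟩} with hA
  set B : A → Type u := fun g' =>
    {k : Src D g'.1.1 // (⟨P.obj g'.1.1, srcMap P g'.1.1 k⟩ : Σ y : C, Src C y)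
      = ⟨P.obj b0, f2⟩} with hB
  have hPg' : ∀ g' : A, P.obj g'.1.1 = P.obj b0 := fun g' =>
    congrArg Sigma.fst g'.2
  have hBcard : ∀ g' : A, Nat.card (B g') = e g'.1.1 := fun g' =>
    lifts_count_flat h g'.1.1 (P.obj b0) (hPg' g') f2 hf2
  have hBne : ∀ g' : A, Nonempty (B g') ∧ Finite (B g') := by
    intro g'
    have : Nat.card (B g') ≠ 0 := by rw [hBcard g']; have := h.one_le g'.1.1; omega
    exact Nat.card_ne_zero.mp this
  set g0 : A := ⟨⟨b0, m0⟩, rfl⟩ with hg0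
  have hnontriv : Nontrivial (B g0) := by
    haveI := (hBne g0).2
    rw [← Finite.one_lt_card_iff_nontrivial, hBcard g0]
    exact he2
  obtain ⟨k1, k2, hk12⟩ := hnontriv
  set comp : Src C (P.obj xt) := ⟨f2.1, P.map m0 ≫ f2.2⟩ with hcomp
  set T := {s : Src D xt // srcMap P xt s = comp} with hT
  -- the composition pairing lands in T
  have compPf : ∀ (g' : A) (k : B g'),
      srcMap P xt ⟨k.1.1, g'.1.2 ≫ k.1.2⟩ = comp := by
    rintro ⟨⟨gb, gm⟩, hg'⟩ ⟨⟨kb, km⟩, hk⟩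
    obtain ⟨q1, hq1⟩ := src_eq_elim hg'
    obtain ⟨q, q2, hq⟩ := flat_eq_elim hk
    dsimp [srcMap] at q1 hq1 q q2 hq ⊢
    refine Src.mk_ext q2 ?_
    rw [P.map_comp, hq1, hq]
    simp
  -- injectivity of the composition pairing
  have compInj : ∀ (g1' g2' : A) (kk1 : B g1') (kk2 : B g2'),
      (⟨kk1.1.1, g1'.1.2 ≫ kk1.1.2⟩ : Src D xt) = ⟨kk2.1.1, g2'.1.2 ≫ kk2.1.2⟩ →
      (⟨g1', kk1⟩ : Σ a : A, B a) = ⟨g2', kk2⟩ := by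
    rintro ⟨⟨gb1, gm1⟩, hg1'⟩ ⟨⟨gb2, gm2⟩, hg2'⟩ ⟨⟨kb1, km1⟩, hk1⟩ ⟨⟨kb2, km2⟩, hk2⟩ hc
    obtain ⟨qk, hqk⟩ := src_eq_elim hc
    dsimp only at qk
    subst qk
    obtain ⟨qa, q2a, ha⟩ := flat_eq_elim hk1
    obtain ⟨qb, q2b, hb⟩ := flat_eq_elim hk2
    dsimp [srcMap] at qa q2a ha qb q2b hb
    have hgb : (⟨gb1, km1⟩ : Tgt D kb1) = ⟨gb2, km2⟩ := by
      refine tgt_lift_unique h km1 km2 (qa.trans qb.symm) ?_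
      refine HEq.trans ((conj_eqToHom_iff_heq' _ _ qa q2a.symm).mp ha) ?_
      exact (HEq.symm ((conj_eqToHom_iff_heq' _ _ qb q2b.symm).mp hb))
    obtain ⟨hgbe, hkme⟩ := Sigma.mk.inj_iff.mp hgb
    subst hgbe
    have hkm : km1 = km2 := eq_of_heq hkme
    subst hkm
    obtain ⟨qa1, hqa1⟩ := src_eq_elim hg1'
    obtain ⟨qb1, hqb1⟩ := src_eq_elim hg2'
    dsimp [srcMap] at qa1 hqa1 qb1 hqb1
    have hgm : (⟨xt, gm1⟩ : Tgt D gb1) = ⟨xt, gm2⟩ := by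
      refine tgt_lift_unique h gm1 gm2 rfl ?_
      rw [hqa1, hqb1]
    obtain ⟨-, hgme⟩ := Sigma.mk.inj_iff.mp hgm
    have hgm' : gm1 = gm2 := eq_of_heq hgme
    subst hgm'
    have : hk1 = hk2 := rfl
    subst this
    rfl
  -- choice of continuations
  have kc : ∀ a : A, B a := fun a => Classical.choice (hBne a).1
  set w : ∀ a : A, B a := fun a => dite (a = g0) (fun hh => hh.symm ▸ k1) (fun _ => kc a)
    with hw
  have hwg0 : w g0 = k1 := by rw [hw]; simp
  -- the injection
  set Ψ : A ⊕ PUnit.{u+1} → T := Sum.elim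
      (fun a => ⟨⟨(w a).1.1, a.1.2 ≫ (w a).1.2⟩, compPf a (w a)⟩)
      (fun _ => ⟨⟨k2.1.1, g0.1.2 ≫ k2.1.2⟩, compPf g0 k2⟩) with hΨ
  have hinj : Function.Injective Ψ := by
    rintro (a | u) (a' | u') hval
    · rw [hΨ] at hval
      simp only [Sum.elim_inl] at hval
      replace hval := congrArg Subtype.val hval
      have := compInj a a' (w a) (w a') hval
      obtain ⟨ha, -⟩ := Sigma.mk.inj_iff.mp this
      rw [ha]
    · exfalso
      rw [hΨ] at hval
      simp only [Sum.elim_inl, Sum.elim_inr] at hval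
      replace hval := congrArg Subtype.val hval
      have := compInj a g0 (w a) k2 hval
      obtain ⟨ha, hk⟩ := Sigma.mk.inj_iff.mp this
      subst ha
      rw [hwg0] at hk
      exact hk12 (eq_of_heq hk)
    · exfalso
      rw [hΨ] at hval
      simp only [Sum.elim_inl, Sum.elim_inr] at hval
      replace hval := congrArg Subtype.val hval
      have := compInj g0 a' k2 (w a') hval
      obtain ⟨ha, hk⟩ := Sigma.mk.inj_iff.mp this
      subst ha
      rw [hwg0] at hk
      exact hk12 (eq_of_heq hk).symm
    · rw [Unique.eq_default u, Unique.eq_default u']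
  -- cardinalities
  have hAcard : Nat.card A = e xt := lifts_count_ne h xt (srcMap P xt ⟨b0, m0⟩) hg
  haveI : Finite A := by
    apply Nat.finite_of_card_ne_zero
    rw [hAcard]; have := h.one_le xt; omega
  have hTcard : Nat.card T ≤ e xt := by
    by_cases hcid : comp = ⟨P.obj xt, 𝟙 (P.obj xt)⟩
    · rw [hT, hcid, lifts_count_id h xt]
      exact h.one_le xt
    · rw [hT, lifts_count_ne h xt comp hcid]
  haveI : Finite T := by
    apply Nat.finite_of_card_ne_zero
    by_cases hcid : comp = ⟨P.obj xt, 𝟙 (P.obj xt)⟩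
    · rw [hT, hcid, lifts_count_id h xt]; omega
    · rw [hT, lifts_count_ne h xt comp hcid]; have := h.one_le xt; omega
  have hle := Nat.card_le_card_of_injective Ψ hinj
  rw [Nat.card_sum, hAcard, Nat.card_unique] at hle
  omega

end Covering2

section Lifting

variable {D : Type u} [SmallCategory D] {P : D ⥤ C} {e : D → ℕ}

/-- The first morphism of a chain, as an element of `Src C x`. -/
def Chain.headSrc {n : ℕ} (c : Chain C (n+1)) {x : C} (hx : c.obj 0 = x) : Src C x :=
  ⟨c.obj (Fin.succ 0), eqToHom hx.symm ≫ c.map 0⟩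

@[simp] theorem Chain.headSrc_def {n : ℕ} (c : Chain C (n+1)) {x : C} (hx : c.obj 0 = x) :
    c.headSrc hx = ⟨c.obj (Fin.succ 0), eqToHom hx.symm ≫ c.map 0⟩ := rfl

theorem Chain.eq_const_iff {n : ℕ} (c : Chain C (n+1)) {x : C} (hx : c.obj 0 = x) :
    c = Chain.const C x (n+1) ↔ c.tail = Chain.const C x n ∧
      c.headSrc hx = ⟨x, 𝟙 x⟩ := by
  subst hx
  constructor
  · intro hc
    have h1 := (Chain.cons_eq_const_iff (c.obj 0) c.tail (c.map 0)).mp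
      ((Chain.eq_cons c).symm.trans hc)
    refine ⟨h1.1, ?_⟩
    obtain ⟨q, hm⟩ := src_eq_elim h1.2
    refine Src.mk_ext q ?_
    simp only [Chain.headSrc_def, eqToHom_refl, Category.id_comp]
    exact (Category.id_comp (c.map 0)).trans (hm.trans (Category.id_comp _))
  · rintro ⟨h1, h2⟩
    rw [Chain.eq_cons c]
    refine (Chain.cons_eq_const_iff (c.obj 0) c.tail (c.map 0)).mpr ⟨h1, ?_⟩
    obtain ⟨q, hm⟩ := src_eq_elim h2
    refine Src.mk_ext q ?_
    exact (Category.id_comp (c.map 0)).symm.trans hm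

theorem sigma_subtype_ext {α : Type u} {p : α → Prop} {β : Type u}
    {q : {a // p a} → β → Prop}
    (x y : Σ a : {a // p a}, {b : β // q a b}) (h1 : x.1 = y.1) (h2 : x.2.1 = y.2.1) :
    x = y := by
  obtain ⟨⟨a, ha⟩, ⟨b, hb⟩⟩ := x
  obtain ⟨⟨a', ha'⟩, ⟨b', hb'⟩⟩ := y
  dsimp at h1 h2
  have : a = a' := congrArg Subtype.val h1
  subst this
  subst h2
  rfl

theorem Chain.cons_congr {x x' : C} {t t' : Chain C n} {g : x ⟶ t.obj 0} {g' : x' ⟶ t'.obj 0}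
    (hx : x = x') (ht : t = t') (hg : HEq g g') :
    Chain.cons x t g = Chain.cons x' t' g' := by
  subst hx; subst ht; rw [eq_of_heq hg]

/-- Lifts of a chain `c` of length `n+1` starting at `xt` correspond to pairs of a lift
of the first morphism and a lift of the tail. -/
noncomputable def liftsEquiv (h : IsRamifiedCovering P e) (xt : D) {n : ℕ}
    (c : Chain C (n+1)) (hx : c.obj 0 = P.obj xt) :
    {c' : Chain D (n+1) // c'.obj 0 = xt ∧ c'.push P = c} ≃
    Σ g : {g : Src D xt // srcMap P xt g = c.headSrc hx},
      {t' : Chain D n // t'.obj 0 = g.1.1 ∧ t'.push P = c.tail} where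
  toFun p :=
    ⟨⟨⟨p.1.obj (Fin.succ 0), eqToHom p.2.1.symm ≫ p.1.map 0⟩, by
        obtain ⟨c', h0, hp⟩ := p
        subst hp
        refine Src.mk_ext rfl ?_
        simp only [Chain.headSrc_def, srcMap, Chain.push, P.map_comp, eqToHom_map, eqToHom_refl,
          Category.comp_id]
        erw [P.map_comp, eqToHom_map]
        apply eq_of_heq
        simp [eqToHom_comp_heq_iff, comp_eqToHom_heq_iff, heq_eqToHom_comp_iff, heq_comp_eqToHom_iff]
        done⟩,
      ⟨p.1.tail, rfl, by rw [Chain.push_tail, p.2.2]⟩⟩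
  invFun q :=
    ⟨Chain.cons xt q.2.1 (q.1.1.2 ≫ eqToHom q.2.2.1.symm), Chain.cons_obj_zero _ _ _, by
      rw [Chain.push_cons]
      conv_rhs => rw [Chain.eq_cons c]
      obtain ⟨⟨g, hgsrc⟩, ⟨t', ht0, htp⟩⟩ := q
      dsimp only
      obtain ⟨q1, hq1⟩ := src_eq_elim hgsrc
      have r : c.obj (Fin.succ 0) = P.obj (t'.obj 0) := by
        rw [← q1, ht0]
      refine Chain.cons_congr hx.symm htp ?_
      refine (conj_eqToHom_iff_heq' _ _ hx.symm r).mp ?_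
      rw [P.map_comp, hq1, eqToHom_map]
      simp
      erw [Category.assoc, eqToHom_trans]⟩
  left_inv p := by
    apply Subtype.ext
    dsimp only
    conv_rhs => rw [Chain.eq_cons p.1]
    refine Chain.cons_congr p.2.1.symm rfl ?_
    refine (conj_eqToHom_iff_heq' _ _ p.2.1.symm rfl).mp ?_
    simp
    erw [Category.assoc, Category.comp_id]
  right_inv q := by
    refine sigma_subtype_ext _ _ ?_ ?_
    · apply Subtype.ext
      dsimp only
      refine Src.mk_ext q.2.2.1 ?_
      rw [Chain.cons_map_zero]
      simp
      erw [eqToHom_refl, Category.id_comp]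
      rfl
    · exact Chain.tail_cons _ _ _

theorem card_sigma_const {S : Type u} {B : S → Type u} [Finite S] (K : ℕ) (hK : K ≠ 0)
    (hB : ∀ g, Nat.card (B g) = K) : Nat.card (Σ g, B g) = Nat.card S * K := by
  classical
  cases nonempty_fintype S
  haveI : ∀ g, Finite (B g) := fun g => Nat.finite_of_card_ne_zero (by rw [hB g]; exact hK)
  haveI : ∀ g : S, Fintype (B g) := fun g => Fintype.ofFinite _
  have hBc : ∀ g, Fintype.card (B g) = K := fun g => by rw [← Nat.card_eq_fintype_card, hB]
  simp only [Nat.card_eq_fintype_card, Fintype.card_sigma, hBc, Finset.sum_const,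
    smul_eq_mul, Finset.card_univ, mul_comm]

end Lifting

section Main

variable {D : Type u} [SmallCategory D] {P : D ⥤ C} {e : D → ℕ}

theorem main_ind (h : IsRamifiedCovering P e) :
    ∀ n : ℕ, ∀ xt : D,
      (∀ c : Chain C n, c.obj 0 = P.obj xt → c ≠ Chain.const C (P.obj xt) n →
        Nat.card {c' : Chain D n // c'.obj 0 = xt ∧ c'.push P = c} = e xt) ∧
      (∀ c' : Chain D n, c'.obj 0 = xt → c'.push P = Chain.const C (P.obj xt) n →
        c' = Chain.const D xt n) := by
  intro n
  induction n with
  | zero =>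
    intro xt
    constructor
    · intro c hc hne
      exfalso; apply hne
      refine Chain.ext' (funext fun i => ?_) (fun i => i.elim0)
      have hi : i = 0 := Fin.fin_one_eq_zero i
      rw [hi, hc]; rfl
    · intro c' h0 hp
      refine Chain.ext' (funext fun i => ?_) (fun i => i.elim0)
      have hi : i = 0 := Fin.fin_one_eq_zero i
      rw [hi, h0]; rfl
  | succ n IH =>
    intro xt
    constructor
    · intro c hx hcne
      rw [Nat.card_congr (liftsEquiv h xt c hx)]
      by_cases hA : c.headSrc hx = ⟨P.obj xt, 𝟙 (P.obj xt)⟩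
      · -- the first morphism of `c` is an identity
        have htail0 : c.tail.obj 0 = P.obj xt := congrArg Sigma.fst hA
        have htne : c.tail ≠ Chain.const C (P.obj xt) n := by
          intro hteq
          exact hcne ((Chain.eq_const_iff c hx).mpr ⟨hteq, hA⟩)
        have hScard : Nat.card {g : Src D xt // srcMap P xt g = c.headSrc hx} = 1 := by
          simp only [hA]
          exact lifts_count_id h xt
        haveI : Finite {g : Src D xt // srcMap P xt g = c.headSrc hx} :=
          Nat.finite_of_card_ne_zero (by omega)
        have hB : ∀ g : {g : Src D xt // srcMap P xt g = c.headSrc hx},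
            Nat.card {t' : Chain D n // t'.obj 0 = g.1.1 ∧ t'.push P = c.tail} = e xt := by
          intro g
          have hg1 : g.1 = ⟨xt, 𝟙 xt⟩ := id_lift h xt g.1 (by rw [g.2, hA])
          have hg11 : g.1.1 = xt := congrArg Sigma.fst hg1
          simp only [hg11]
          exact (IH xt).1 c.tail htail0 htne
        rw [card_sigma_const (e xt) (by have := h.one_le xt; omega) hB, hScard, one_mul]
      · -- the first morphism of `c` is not an identity
        have hScard : Nat.card {g : Src D xt // srcMap P xt g = c.headSrc hx} = e xt :=
          lifts_count_ne h xt _ hA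
        haveI : Finite {g : Src D xt // srcMap P xt g = c.headSrc hx} :=
          Nat.finite_of_card_ne_zero (by rw [hScard]; have := h.one_le xt; omega)
        have hB : ∀ g : {g : Src D xt // srcMap P xt g = c.headSrc hx},
            Nat.card {t' : Chain D n // t'.obj 0 = g.1.1 ∧ t'.push P = c.tail} = 1 := by
          intro g
          have hgne : srcMap P xt g.1 ≠ ⟨P.obj xt, 𝟙 (P.obj xt)⟩ := by
            rw [g.2]; exact hA
          have he1 : e g.1.1 = 1 := e_target_one h xt g.1 hgne
          have htail0 : c.tail.obj 0 = P.obj g.1.1 := (congrArg Sigma.fst g.2).symm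
          by_cases htc : c.tail = Chain.const C (P.obj g.1.1) n
          · haveI : Unique {t' : Chain D n // t'.obj 0 = g.1.1 ∧ t'.push P = c.tail} :=
              { default := ⟨Chain.const D g.1.1 n, rfl, by rw [Chain.push_const, ← htc]⟩
                uniq := fun t' =>
                  Subtype.ext ((IH g.1.1).2 t'.1 t'.2.1 (by rw [t'.2.2, htc])) }
            exact Nat.card_unique
          · rw [(IH g.1.1).1 c.tail htail0 htc]
            exact he1
        rw [card_sigma_const 1 one_ne_zero hB, hScard, mul_one]
    · intro c' h0 hp
      subst h0
      have hconst := (Chain.eq_const_iff (c'.push P) rfl).mp hp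
      have hcompat : srcMap P (c'.obj 0) (c'.headSrc rfl) = (c'.push P).headSrc rfl := by
        simp only [srcMap, Chain.headSrc_def, Chain.push, P.map_comp, eqToHom_map,
          eqToHom_refl, Category.id_comp]
        erw [Category.id_comp, Category.id_comp]
        rfl
      have hhl : c'.headSrc rfl = ⟨c'.obj 0, 𝟙 (c'.obj 0)⟩ :=
        id_lift h (c'.obj 0) (c'.headSrc rfl) (hcompat.trans hconst.2)
      have htl : c'.tail = Chain.const D (c'.obj 0) n := by
        refine (IH (c'.obj 0)).2 c'.tail (congrArg Sigma.fst hhl) ?_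
        rw [Chain.push_tail, hp]
        rfl
      exact (Chain.eq_const_iff c' rfl).mpr ⟨htl, hhl⟩

end Main


theorem ramifiedCovering_chain_count {D C : Type u} [SmallCategory D] [SmallCategory C]
    (P : D ⥤ C) (e : D → ℕ) (h : IsRamifiedCovering P e) (xt : D) (n : ℕ) (hn : 1 ≤ n) :
    (∀ c : Chain C n, c.obj 0 = P.obj xt → c ≠ Chain.const C (P.obj xt) n →
      Nat.card {c' : Chain D n // c'.obj 0 = xt ∧ c'.push P = c} = e xt) ∧
    ((Chain.const D xt n).push P = Chain.const C (P.obj xt) n) ∧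
    (∀ c' : Chain D n, c'.obj 0 = xt → c'.push P = Chain.const C (P.obj xt) n →
      c' = Chain.const D xt n) := by
  obtain ⟨p1, p2⟩ := main_ind h n xt
  exact ⟨p1, Chain.push_const P xt, p2⟩
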